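/- Consider N UAVs with computation times T_n^{comp} ≥ 0, payload sizes d_n > 0, bandwidth B > 0 and SNR constants c_n > 0. Let T_min = max_n (T_n^{comp} + d_n·ln 2/(B·c_n)), and for T > T_min let γ_n(T) > 0 denote the unique solution of f_{c_n}(γ) = d_n·ln 2/(B(T − T_n^{comp})). Then the total demanded bandwidth S(T) = Σ_{n=1}^N γ_n(T) is continuous and strictly decreasing on (T_min, ∞), S(T) → ∞ as T → T_min⁺, and S(T) → 0 as T → ∞; hence there is a unique T* ∈ (T_min, ∞) with S(T*) = 1. -/

import Mathlib

open Real Set Filter Topology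

noncomputable def fc (c γ : ℝ) : ℝ := γ * Real.log (1 + c / γ)

lemma log_gt (x : ℝ) (hx : 0 < x) : x / (1 + x) < Real.log (1 + x) := by
  have h1 : (0:ℝ) < 1 + x := by linarith
  have h2 := Real.log_lt_sub_one_of_pos (x := (1+x)⁻¹) (by positivity)
    (by intro h; rw [inv_eq_one] at h; linarith)
  rw [Real.log_inv] at h2
  have : 1 - (1+x)⁻¹ = x / (1+x) := by field_simp; ring
  linarith [this ▸ (by linarith : 1 - (1+x)⁻¹ < Real.log (1+x))]

lemma fc_pos {c γ : ℝ} (hc : 0 < c) (hγ : 0 < γ) : 0 < fc c γ := by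
  have : 0 < Real.log (1 + c / γ) := Real.log_pos (by have := div_pos hc hγ; linarith)
  exact mul_pos hγ this

lemma fc_lt {c γ : ℝ} (hc : 0 < c) (hγ : 0 < γ) : fc c γ < c := by
  have hx : 0 < c / γ := div_pos hc hγ
  have h := Real.log_lt_sub_one_of_pos (x := 1 + c/γ) (by linarith) (by intro h; linarith)
  have : Real.log (1 + c/γ) < c / γ := by linarith
  calc fc c γ < γ * (c / γ) := by exact mul_lt_mul_of_pos_left this hγ
  _ = c := by field_simp

lemma fc_hasDerivAt {c γ : ℝ} (hc : 0 < c) (hγ : 0 < γ) :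
    HasDerivAt (fc c) (Real.log (1 + c / γ) - c / (γ + c)) γ := by
  have h1 : HasDerivAt (fun y : ℝ => 1 + c / y) (c * (-(γ^2)⁻¹)) γ := by
    simpa [div_eq_mul_inv] using ((hasDerivAt_inv hγ.ne').const_mul c).const_add 1
  have hne : 1 + c / γ ≠ 0 := by positivity
  have h2 := (Real.hasDerivAt_log hne).comp γ h1
  have h3 : HasDerivAt (fc c) _ γ := (hasDerivAt_id γ).mul h2
  convert h3 using 1
  have hγc : γ + c ≠ 0 := by positivity
  show _ = 1 * Real.log (1 + c / γ) + γ * ((1 + c / γ)⁻¹ * (c * -(γ ^ 2)⁻¹))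
  field_simp
  ring

lemma fc_strictMonoOn {c : ℝ} (hc : 0 < c) : StrictMonoOn (fc c) (Set.Ioi 0) := by
  have hd : ∀ x ∈ interior (Set.Ioi (0:ℝ)), 0 < deriv (fc c) x := by
    intro x hx
    rw [interior_Ioi] at hx
    rw [(fc_hasDerivAt hc hx).deriv]
    have hkey := log_gt (c / x) (div_pos hc hx)
    have hx0 : x ≠ 0 := ne_of_gt hx
    have heq : (c/x) / (1 + c/x) = c / (x + c) := by
      rw [show (1 : ℝ) + c/x = (x+c)/x by field_simp, div_div_div_cancel_right₀ hx0]
    rw [heq] at hkey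
    linarith
  exact strictMonoOn_of_deriv_pos (convex_Ioi 0) (fun x hx =>
    (fc_hasDerivAt hc hx).continuousAt.continuousWithinAt) hd

/-- For `N` UAVs with computation times `T_n^comp ≥ 0`, payloads `d_n > 0`, bandwidth
`B > 0` and SNR constants `c_n > 0`, let `T_min = max_n (T_n^comp + d_n·ln 2/(B·c_n))`
and for `T > T_min` let `γ_n(T) > 0` solve `f_{c_n}(γ) = d_n·ln 2/(B(T − T_n^comp))`.
Then the total demanded bandwidth `S(T) = Σ_n γ_n(T)` is continuous and strictly
decreasing on `(T_min, ∞)`, `S(T) → ∞` as `T → T_min⁺`, `S(T) → 0` as `T → ∞`; hence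
there is a unique `T* ∈ (T_min, ∞)` with `S(T*) = 1`. -/
theorem total_bandwidth_demand (N : ℕ) (hN : 0 < N)
    (Tcomp d c : Fin N → ℝ) (B : ℝ)
    (hTcomp : ∀ n, 0 ≤ Tcomp n) (hd : ∀ n, 0 < d n) (hc : ∀ n, 0 < c n) (hB : 0 < B)
    (Tmin : ℝ) (hTmin : Tmin = ⨆ n, (Tcomp n + d n * Real.log 2 / (B * c n)))
    (γfun : Fin N → ℝ → ℝ)
    (hγfun : ∀ n, ∀ T : ℝ, Tmin < T →
      0 < γfun n T ∧
        γfun n T * Real.log (1 + c n / γfun n T) =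
          d n * Real.log 2 / (B * (T - Tcomp n))) :
    ContinuousOn (fun T => ∑ n, γfun n T) (Set.Ioi Tmin) ∧
    StrictAntiOn (fun T => ∑ n, γfun n T) (Set.Ioi Tmin) ∧
    Filter.Tendsto (fun T => ∑ n, γfun n T)
      (nhdsWithin Tmin (Set.Ioi Tmin)) Filter.atTop ∧
    Filter.Tendsto (fun T => ∑ n, γfun n T) Filter.atTop (nhds 0) ∧
    (∃! Tstar : ℝ, Tstar ∈ Set.Ioi Tmin ∧ ∑ n, γfun n Tstar = 1) := by
  haveI : Nonempty (Fin N) := Fin.pos_iff_nonempty.1 hN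
  have hlog2 : 0 < Real.log 2 := Real.log_pos one_lt_two
  have hγeq : ∀ n T, Tmin < T →
      fc (c n) (γfun n T) = d n * Real.log 2 / (B * (T - Tcomp n)) :=
    fun n T hT => (hγfun n T hT).2
  have h1 : ∀ n, Tcomp n + d n * Real.log 2 / (B * c n) ≤ Tmin := by
    intro n; rw [hTmin]
    exact le_ciSup (f := fun n => Tcomp n + d n * Real.log 2 / (B * c n))
      (Set.Finite.bddAbove (Set.finite_range _)) n
  have hpos1 : ∀ n, 0 < d n * Real.log 2 / (B * c n) := by
    intro n; exact div_pos (mul_pos (hd n) hlog2) (mul_pos hB (hc n))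
  have hTsub : ∀ n T, Tmin < T → 0 < T - Tcomp n := by
    intro n T hT; have := h1 n; have := hpos1 n; linarith
  have hTminsub : ∀ n, 0 < Tmin - Tcomp n := by
    intro n; have := h1 n; have := hpos1 n; linarith
  -- V n : supremum of the target values for index n
  set V : Fin N → ℝ := fun n => d n * Real.log 2 / (B * (Tmin - Tcomp n)) with hV
  have hvV : ∀ n T, Tmin < T → fc (c n) (γfun n T) < V n := by
    intro n T hT
    rw [hγeq n T hT]
    simp only [hV]
    apply div_lt_div_of_pos_left (mul_pos (hd n) hlog2) (mul_pos hB (hTminsub n))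
    have : Tmin - Tcomp n < T - Tcomp n := by linarith
    exact mul_lt_mul_of_pos_left this hB
  -- strict antitonicity of each γfun n
  have hSA : ∀ n, StrictAntiOn (γfun n) (Set.Ioi Tmin) := by
    intro n T1 hT1 T2 hT2 hlt
    rw [Set.mem_Ioi] at hT1 hT2
    have hv : d n * Real.log 2 / (B * (T2 - Tcomp n)) <
        d n * Real.log 2 / (B * (T1 - Tcomp n)) := by
      apply div_lt_div_of_pos_left (mul_pos (hd n) hlog2) (mul_pos hB (hTsub n T1 hT1))
      exact mul_lt_mul_of_pos_left (by linarith) hB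
    have hflt : fc (c n) (γfun n T2) < fc (c n) (γfun n T1) := by
      rw [hγeq n T1 hT1, hγeq n T2 hT2]; exact hv
    exact ((fc_strictMonoOn (hc n)).lt_iff_lt (Set.mem_Ioi.2 (hγfun n T2 hT2).1)
      (Set.mem_Ioi.2 (hγfun n T1 hT1).1)).1 hflt
  -- realizability of values
  have realize : ∀ n x, 0 < x → fc (c n) x < V n → ∃ T, Tmin < T ∧ γfun n T = x := by
    intro n x hx hxV
    have hfp : 0 < fc (c n) x := fc_pos (hc n) hx
    refine ⟨Tcomp n + d n * Real.log 2 / (B * fc (c n) x), ?_, ?_⟩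
    · have h2 : Tmin - Tcomp n < d n * Real.log 2 / (B * fc (c n) x) := by
        rw [lt_div_iff₀ (mul_pos hB hfp)]
        simp only [hV] at hxV
        rw [lt_div_iff₀ (mul_pos hB (hTminsub n))] at hxV
        calc (Tmin - Tcomp n) * (B * fc (c n) x)
            = fc (c n) x * (B * (Tmin - Tcomp n)) := by ring
          _ < d n * Real.log 2 := hxV
      linarith
    · have hT : Tmin < Tcomp n + d n * Real.log 2 / (B * fc (c n) x) := by
        have h2 : Tmin - Tcomp n < d n * Real.log 2 / (B * fc (c n) x) := by
          rw [lt_div_iff₀ (mul_pos hB hfp)]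
          simp only [hV] at hxV
          rw [lt_div_iff₀ (mul_pos hB (hTminsub n))] at hxV
          calc (Tmin - Tcomp n) * (B * fc (c n) x)
              = fc (c n) x * (B * (Tmin - Tcomp n)) := by ring
            _ < d n * Real.log 2 := hxV
        linarith
      have e := hγeq n _ hT
      have hveq : d n * Real.log 2 /
          (B * (Tcomp n + d n * Real.log 2 / (B * fc (c n) x) - Tcomp n)) = fc (c n) x := by
        rw [add_sub_cancel_left]
        have hK : (0:ℝ) < d n * Real.log 2 := mul_pos (hd n) hlog2
        have hdn : d n ≠ 0 := (hd n).ne'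
        field_simp
      rw [hveq] at e
      exact (fc_strictMonoOn (hc n)).injOn (Set.mem_Ioi.2 (hγfun n _ hT).1)
        (Set.mem_Ioi.2 hx) e
  -- continuity of each γfun n
  have hcont : ∀ n, ∀ a ∈ Set.Ioi Tmin, ContinuousAt (γfun n) a := by
    intro n a ha
    rw [Set.mem_Ioi] at ha
    have hγa : 0 < γfun n a := (hγfun n a ha).1
    have hg : StrictMonoOn (fun T => -(γfun n T)) (Set.Ioi Tmin) :=
      fun T1 h1' T2 h2' hlt => neg_lt_neg (hSA n h1' h2' hlt)
    have hfa : fc (c n) (γfun n a) < V n := hvV n a ha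
    have hc1 : ContinuousAt (fc (c n)) (γfun n a) :=
      (fc_hasDerivAt (hc n) hγa).continuousAt
    have hev : ∀ᶠ y in nhds (γfun n a), fc (c n) y < V n :=
      hc1.eventually (gt_mem_nhds hfa)
    obtain ⟨ε, hε, hball⟩ := Metric.eventually_nhds_iff.1 hev
    have hga : ContinuousAt (fun T => -(γfun n T)) a := by
      apply hg.continuousAt_of_exists_between (Ioi_mem_nhds ha)
      · intro b hb
        have hb' : b < -(γfun n a) := hb
        set x := min (-b) (γfun n a + ε/2) with hxdef
        have hx1 : γfun n a < x := lt_min (by linarith) (by linarith)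
        clear hb
        have hx0 : 0 < x := lt_trans hγa hx1
        have hxmem : fc (c n) x < V n := by
          apply hball
          rw [Real.dist_eq, abs_lt]
          have h2 := min_le_right (-b) (γfun n a + ε/2)
          constructor <;> [linarith; skip]
          have : x ≤ γfun n a + ε/2 := h2
          linarith
        obtain ⟨T, hT, hTx⟩ := realize n x hx0 hxmem
        refine ⟨T, Set.mem_Ioi.2 hT, ?_⟩
        have hxle : x ≤ -b := min_le_left _ _
        simp only [Set.mem_Ico, hTx]
        exact ⟨by linarith, by linarith⟩
      · intro b hb
        have hb' : -(γfun n a) < b := hb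
        set x := max (-b) (γfun n a / 2) with hxdef
        have hx0 : 0 < x := lt_of_lt_of_le (half_pos hγa) (le_max_right _ _)
        have hxlt : x < γfun n a := max_lt (by linarith) (by linarith)
        clear hb
        have hxmem : fc (c n) x < V n :=
          lt_trans (((fc_strictMonoOn (hc n)).lt_iff_lt (Set.mem_Ioi.2 hx0)
            (Set.mem_Ioi.2 hγa)).2 hxlt) hfa
        obtain ⟨T, hT, hTx⟩ := realize n x hx0 hxmem
        refine ⟨T, Set.mem_Ioi.2 hT, ?_⟩
        have hxge : -b ≤ x := le_max_left _ _
        simp only [Set.mem_Ioc, hTx]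
        exact ⟨by linarith, by linarith⟩
    have := hga.neg
    convert this using 1
    funext T
    simp
  have hScont : ContinuousOn (fun T => ∑ n, γfun n T) (Set.Ioi Tmin) := by
    apply continuousOn_finset_sum
    intro n _
    exact fun a ha => (hcont n a ha).continuousWithinAt
  have hSanti : StrictAntiOn (fun T => ∑ n, γfun n T) (Set.Ioi Tmin) := by
    intro T1 hT1 T2 hT2 hlt
    exact Finset.sum_lt_sum_of_nonempty Finset.univ_nonempty
      (fun n _ => hSA n hT1 hT2 hlt)
  -- blow-up at Tmin
  obtain ⟨m, hm⟩ := Finite.exists_max (fun n => Tcomp n + d n * Real.log 2 / (B * c n))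
  have hTm : Tmin = Tcomp m + d m * Real.log 2 / (B * c m) :=
    le_antisymm (hTmin ▸ ciSup_le hm) (h1 m)
  have hVm : V m = c m := by
    simp only [hV]
    have : Tmin - Tcomp m = d m * Real.log 2 / (B * c m) := by rw [hTm]; ring
    rw [this]
    have hcm := hc m; have hdm := hd m
    field_simp
  have hγm : Filter.Tendsto (γfun m) (nhdsWithin Tmin (Set.Ioi Tmin)) Filter.atTop := by
    rw [Filter.tendsto_atTop]
    intro M
    set M' := max M 1 with hM'def
    have hM' : 0 < M' := lt_of_lt_of_le one_pos (le_max_right _ _)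
    have hfM : fc (c m) M' < c m := fc_lt (hc m) hM'
    have hca : ContinuousAt (fun T => d m * Real.log 2 / (B * (T - Tcomp m))) Tmin := by
      apply ContinuousAt.div continuousAt_const
      · exact continuousAt_const.mul (continuousAt_id.sub continuousAt_const)
      · have := hTminsub m; positivity
    have hvt : Filter.Tendsto (fun T => d m * Real.log 2 / (B * (T - Tcomp m)))
        (nhdsWithin Tmin (Set.Ioi Tmin)) (nhds (c m)) := by
      have := hca.continuousWithinAt (s := Set.Ioi Tmin)
      rw [ContinuousWithinAt] at this
      convert this using 2
      rw [← hVm, hV]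
    have hev1 : ∀ᶠ T in nhdsWithin Tmin (Set.Ioi Tmin),
        fc (c m) M' < d m * Real.log 2 / (B * (T - Tcomp m)) :=
      hvt.eventually (lt_mem_nhds hfM)
    filter_upwards [hev1, eventually_mem_nhdsWithin] with T hv1 hv2
    rw [Set.mem_Ioi] at hv2
    have hlt : fc (c m) M' < fc (c m) (γfun m T) := by
      rw [hγeq m T hv2]; exact hv1
    have := ((fc_strictMonoOn (hc m)).lt_iff_lt (Set.mem_Ioi.2 hM')
      (Set.mem_Ioi.2 (hγfun m T hv2).1)).1 hlt
    exact le_trans (le_max_left M 1) this.le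
  have hStop : Filter.Tendsto (fun T => ∑ n, γfun n T)
      (nhdsWithin Tmin (Set.Ioi Tmin)) Filter.atTop := by
    apply Filter.tendsto_atTop_mono' _ _ hγm
    filter_upwards [eventually_mem_nhdsWithin] with T hT
    rw [Set.mem_Ioi] at hT
    exact Finset.single_le_sum (fun i _ => (hγfun i T hT).1.le) (Finset.mem_univ m)
  -- decay at infinity
  have h0 : ∀ n, Filter.Tendsto (γfun n) Filter.atTop (nhds 0) := by
    intro n
    rw [tendsto_order]
    constructor
    · intro a ha
      filter_upwards [Filter.eventually_gt_atTop Tmin] with T hT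
      exact lt_trans ha (hγfun n T hT).1
    · intro a ha
      have hfa : 0 < fc (c n) a := fc_pos (hc n) ha
      have hden : Filter.Tendsto (fun T : ℝ => B * (T - Tcomp n)) Filter.atTop
          Filter.atTop := by
        apply Filter.Tendsto.const_mul_atTop hB
        simpa [sub_eq_add_neg] using
          Filter.tendsto_atTop_add_const_right Filter.atTop (-(Tcomp n)) Filter.tendsto_id
      have hvt : Filter.Tendsto (fun T => d n * Real.log 2 / (B * (T - Tcomp n)))
          Filter.atTop (nhds 0) :=
        Filter.Tendsto.div_atTop tendsto_const_nhds hden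
      filter_upwards [hvt.eventually (gt_mem_nhds hfa),
        Filter.eventually_gt_atTop Tmin] with T h1' h2'
      have : fc (c n) (γfun n T) < fc (c n) a := by rw [hγeq n T h2']; exact h1'
      exact ((fc_strictMonoOn (hc n)).lt_iff_lt (Set.mem_Ioi.2 (hγfun n T h2').1)
        (Set.mem_Ioi.2 ha)).1 this
  have hS0 : Filter.Tendsto (fun T => ∑ n, γfun n T) Filter.atTop (nhds 0) := by
    have := tendsto_finset_sum Finset.univ (fun n (_ : n ∈ Finset.univ) => h0 n)
    simpa using this
  -- unique fixed point
  refine ⟨hScont, hSanti, hStop, hS0, ?_⟩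
  obtain ⟨T1, hT1a, hT1b⟩ :=
    ((hStop.eventually (Filter.eventually_ge_atTop 2)).and eventually_mem_nhdsWithin).exists
  rw [Set.mem_Ioi] at hT1b
  obtain ⟨T2, hT2a, hT2b⟩ :=
    ((hS0.eventually (gt_mem_nhds (by norm_num : (0:ℝ) < 1))).and
      (Filter.eventually_gt_atTop T1)).exists
  have hsub : Set.Icc T1 T2 ⊆ Set.Ioi Tmin := fun x hx => lt_of_lt_of_le hT1b hx.1
  have hIVT := intermediate_value_Icc' (le_of_lt hT2b) (hScont.mono hsub)
  obtain ⟨Tstar, hTs, hTseq⟩ := hIVT ⟨hT2a.le, by linarith⟩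
  refine ⟨Tstar, ⟨hsub hTs, hTseq⟩, ?_⟩
  rintro y ⟨hy1, hy2⟩
  exact hSanti.injOn hy1 (hsub hTs) (hy2.trans hTseq.symm)
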